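/- (Retraction onto a union of two coordinate subspaces, affine content of the paper's Proposition 2.11.) Let K be a field equipped with a valuation v : K → Γ₀, where Γ₀ is a linearly ordered commutative group with zero, and give K^n = (Fin n → K) the product of the valuation topologies. Let α and β be nonempty subsets of Fin n, and set C_α = {x ∈ K^n : ∀ i ∈ α, x_i = 0}, C_β = {x ∈ K^n : ∀ i ∈ β, x_i = 0}. For a nonempty S ⊆ Fin n let π_S : K^n → K^n be the map that replaces x_i by 0 for i ∈ S and leaves the other coordinates unchanged, and let d_S(x) = max_{i∈S} v(x_i) ∈ Γ₀. Define ω : K^n → K^n by ω(x) = π_α(x) if d_α(x) < d_β(x), ω(x) = π_β(x) if d_β(x) < d_α(x), and ω(x) = π_{α∪β}(x) if d_α(x) = d_β(x). Then ω is continuous, ω(x) = x for every x ∈ C_α ∪ C_β, and the range of ω is contained in C_α ∪ C_β; that is, ω is a continuous retraction of K^n onto C_α ∪ C_β. -/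

import Mathlib

open Filter Finset Topology

section
variable {K : Type*} [Field K] {Γ₀ : Type*} [LinearOrderedCommGroupWithZero Γ₀] [Valued K Γ₀]

lemma evA (a : K) (c : Γ₀) (hc : c ≠ 0) (hc' : ∃ e : K, Valued.v e = c) (h : Valued.v a < c) :
    ∀ᶠ b in 𝓝 a, Valued.v b < c := by
  have hmem : {b : K | Valued.v (b - a) < c} ∈ 𝓝 a := by
    obtain ⟨e, rfl⟩ := hc'
    rw [Valued.mem_nhds]
    exact ⟨Units.mk0 (Valued.v.restrict e) (by simpa using hc), fun y hy => by simpa using hy⟩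
  filter_upwards [hmem] with b hb
  have : Valued.v b = Valued.v ((b - a) + a) := by rw [sub_add_cancel]
  rw [this]
  exact lt_of_le_of_lt (Valuation.map_add _ _ _) (max_lt hb h)

lemma evSupEq {n : ℕ} (S : Finset (Fin n)) (hS : S.Nonempty) (x : Fin n → K)
    (hne : S.sup' hS (fun i => Valued.v (x i)) ≠ 0) :
    ∀ᶠ y in 𝓝 x, S.sup' hS (fun i => Valued.v (y i)) = S.sup' hS (fun i => Valued.v (x i)) := by
  set c := S.sup' hS (fun i => Valued.v (x i)) with hc
  obtain ⟨j, hjS, hj⟩ := Finset.exists_mem_eq_sup' hS (fun i => Valued.v (x i))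
  have hle : ∀ i ∈ S, ∀ᶠ y in 𝓝 x, Valued.v (y i) ≤ c := by
    intro i hi
    rcases eq_or_ne (Valued.v (x i)) 0 with h0 | h0
    · have := evA (x i) c hne ⟨x j, hj.symm⟩ (h0 ▸ (zero_lt_iff.mpr hne))
      have := ((continuous_apply i).continuousAt (x := x)).eventually this
      exact this.mono fun y hy => le_of_lt hy
    · have := Valued.locally_const h0
      have := ((continuous_apply i).continuousAt (x := x)).eventually this
      exact this.mono fun y hy => hy.le.trans (Finset.le_sup' (fun i => Valued.v (x i)) hi)
  have hj' : ∀ᶠ y in 𝓝 x, Valued.v (y j) = c := by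
    have hj0 : Valued.v (x j) ≠ 0 := by rw [← hj]; exact hne
    have := Valued.locally_const hj0
    have := ((continuous_apply j).continuousAt (x := x)).eventually this
    exact this.mono fun y hy => by rw [hy, ← hj]
  have hall : ∀ᶠ y in 𝓝 x, ∀ i ∈ S, Valued.v (y i) ≤ c :=
    (Filter.eventually_all_finset S).mpr hle
  filter_upwards [hall, hj'] with y h1 h2
  refine le_antisymm (Finset.sup'_le _ _ h1) ?_
  calc c = Valued.v (y j) := h2.symm
    _ ≤ _ := Finset.le_sup' (fun i => Valued.v (y i)) hjS

lemma evSupLt {n : ℕ} (S : Finset (Fin n)) (hS : S.Nonempty) (x : Fin n → K)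
    (c : Γ₀) (hc : c ≠ 0) (hc' : ∃ e : K, Valued.v e = c) (h : S.sup' hS (fun i => Valued.v (x i)) < c) :
    ∀ᶠ y in 𝓝 x, S.sup' hS (fun i => Valued.v (y i)) < c := by
  have hall : ∀ᶠ y in 𝓝 x, ∀ i ∈ S, Valued.v (y i) < c := by
    rw [Filter.eventually_all_finset]
    intro i hi
    exact ((continuous_apply i).continuousAt (x := x)).eventually
      (evA (x i) c hc hc' (lt_of_le_of_lt (Finset.le_sup' (fun i => Valued.v (x i)) hi) h))
  exact hall.mono fun y hy => (Finset.sup'_lt_iff hS).mpr hy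

end

section
variable {K : Type*} [Field K] {Γ₀ : Type*} [LinearOrderedCommGroupWithZero Γ₀] [Valued K Γ₀]

lemma supZero {n : ℕ} (S : Finset (Fin n)) (hS : S.Nonempty) (x : Fin n → K) :
    S.sup' hS (fun i => Valued.v (x i)) = 0 ↔ ∀ i ∈ S, x i = 0 := by
  constructor
  · intro h i hi
    have : Valued.v (x i) ≤ 0 := h ▸ Finset.le_sup' (fun i => Valued.v (x i)) hi
    exact (Valuation.zero_iff Valued.v).mp (le_zero_iff.mp this)
  · intro h
    refine le_antisymm (Finset.sup'_le _ _ fun i hi => ?_) zero_le'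
    simp [h i hi]

end

/-- Retraction onto a union of two coordinate subspaces (affine content of Proposition 2.11
of the paper): over a valued field `K`, the map `ω` that projects `x` onto the coordinate
subspace `C_α` (resp. `C_β`, resp. `C_{α∪β}`) according to the comparison of
`d_α(x) = max_{i∈α} v(x_i)` and `d_β(x)` is a continuous retraction of `K^n` onto
`C_α ∪ C_β`. -/
theorem retraction_onto_two_coordinate_subspaces
    {K : Type*} [Field K] {Γ₀ : Type*} [LinearOrderedCommGroupWithZero Γ₀]
    [Valued K Γ₀] (n : ℕ)
    (α β : Finset (Fin n)) (hα : α.Nonempty) (hβ : β.Nonempty)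
    (ω : (Fin n → K) → (Fin n → K))
    (hω₁ : ∀ x : Fin n → K,
      α.sup' hα (fun i => Valued.v (x i)) < β.sup' hβ (fun i => Valued.v (x i)) →
        ω x = fun i => if i ∈ α then 0 else x i)
    (hω₂ : ∀ x : Fin n → K,
      β.sup' hβ (fun i => Valued.v (x i)) < α.sup' hα (fun i => Valued.v (x i)) →
        ω x = fun i => if i ∈ β then 0 else x i)
    (hω₃ : ∀ x : Fin n → K,
      α.sup' hα (fun i => Valued.v (x i)) = β.sup' hβ (fun i => Valued.v (x i)) →
        ω x = fun i => if i ∈ α ∪ β then 0 else x i) :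
    Continuous ω ∧
    Set.range ω ⊆ ({x | ∀ i ∈ α, x i = 0} ∪ {x | ∀ i ∈ β, x i = 0}) ∧
    ∀ x ∈ ({x | ∀ i ∈ α, x i = 0} ∪ {x | ∀ i ∈ β, x i = 0} : Set (Fin n → K)),
      ω x = x := by
  have hcont : ∀ S : Finset (Fin n),
      Continuous (fun x : Fin n → K => fun i => if i ∈ S then (0 : K) else x i) := by
    intro S
    refine continuous_pi fun i => ?_
    rcases em (i ∈ S) with h | h
    · simpa [h] using (continuous_const : Continuous fun _ : Fin n → K => (0 : K))
    · simpa [h] using continuous_apply i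
  refine ⟨?_, ?_, ?_⟩
  · -- continuity
    rw [continuous_iff_continuousAt]
    intro x
    rcases lt_trichotomy (α.sup' hα fun i => Valued.v (x i))
        (β.sup' hβ fun i => Valued.v (x i)) with h | h | h
    · have hβ0 : (β.sup' hβ fun i => Valued.v (x i)) ≠ 0 := (lt_of_le_of_lt zero_le' h).ne'
      have e1 := evSupEq β hβ x hβ0
      have e2 := evSupLt α hα x _ hβ0 (by obtain ⟨j, -, hj⟩ := Finset.exists_mem_eq_sup' hβ (fun i => Valued.v (x i)); exact ⟨x j, hj.symm⟩) h
      have heq : ∀ᶠ y in 𝓝 x, ω y = fun i => if i ∈ α then 0 else y i := by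
        filter_upwards [e1, e2] with y h1 h2
        exact hω₁ y (by rw [h1]; exact h2)
      exact ((hcont α).continuousAt).congr_of_eventuallyEq heq
    · by_cases h0 : (α.sup' hα fun i => Valued.v (x i)) = 0
      · -- degenerate
        have hβ0 : (β.sup' hβ fun i => Valued.v (x i)) = 0 := h ▸ h0
        have hx0 : ∀ i ∈ α ∪ β, x i = 0 := by
          intro i hi
          rcases Finset.mem_union.mp hi with hi | hi
          · exact (supZero α hα x).mp h0 i hi
          · exact (supZero β hβ x).mp hβ0 i hi
        have hωx : ω x = x := by
          rw [hω₃ x h]; funext i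
          rcases em (i ∈ α ∪ β) with hi | hi
          · simp [hi, hx0 i hi]
          · simp [hi]
        rw [ContinuousAt, hωx, tendsto_pi_nhds]
        intro i
        rcases em (i ∈ α ∪ β) with hi | hi
        · have hbound : ∀ y : Fin n → K, Valued.v (ω y i) ≤ Valued.v (y i) := by
            intro y
            rcases lt_trichotomy (α.sup' hα fun j => Valued.v (y j))
                (β.sup' hβ fun j => Valued.v (y j)) with hy | hy | hy
            · rw [hω₁ y hy]
              rcases em (i ∈ α) with hiα | hiα <;> simp [hiα]
            · rw [hω₃ y hy]
              rcases em (i ∈ α ∪ β) with hi' | hi' <;> simp [hi']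
            · rw [hω₂ y hy]
              rcases em (i ∈ β) with hiβ | hiβ <;> simp [hiβ]
          rw [hx0 i hi]
          rw [(Valued.hasBasis_nhds_zero K Γ₀).tendsto_right_iff]
          intro γ _
          have ht : Tendsto (fun y : Fin n → K => y i) (𝓝 x) (𝓝 0) :=
            hx0 i hi ▸ (continuous_apply i).tendsto x
          have hev := ht.eventually ((Valued.hasBasis_nhds_zero K Γ₀).mem_of_mem (i := γ) trivial)
          filter_upwards [hev] with y hy
          exact lt_of_le_of_lt ((Valuation.restrict_le_iff Valued.v).mpr (hbound y)) hy
        · have hiα : i ∉ α := fun hh => hi (Finset.mem_union_left _ hh)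
          have hiβ : i ∉ β := fun hh => hi (Finset.mem_union_right _ hh)
          have hfun : (fun y : Fin n → K => ω y i) = fun y => y i := by
            funext y
            rcases lt_trichotomy (α.sup' hα fun j => Valued.v (y j))
                (β.sup' hβ fun j => Valued.v (y j)) with hy | hy | hy
            · rw [hω₁ y hy]; simp [hiα]
            · rw [hω₃ y hy]; simp [hi]
            · rw [hω₂ y hy]; simp [hiβ]
          rw [hfun]
          exact (continuous_apply i).continuousAt
      · have hβ0 : (β.sup' hβ fun i => Valued.v (x i)) ≠ 0 := h ▸ h0
        have e1 := evSupEq α hα x h0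
        have e2 := evSupEq β hβ x hβ0
        have heq : ∀ᶠ y in 𝓝 x, ω y = fun i => if i ∈ α ∪ β then 0 else y i := by
          filter_upwards [e1, e2] with y h1 h2
          exact hω₃ y (by rw [h1, h2, h])
        exact ((hcont (α ∪ β)).continuousAt).congr_of_eventuallyEq heq
    · have hα0 : (α.sup' hα fun i => Valued.v (x i)) ≠ 0 := (lt_of_le_of_lt zero_le' h).ne'
      have e1 := evSupEq α hα x hα0
      have e2 := evSupLt β hβ x _ hα0 (by obtain ⟨j, -, hj⟩ := Finset.exists_mem_eq_sup' hα (fun i => Valued.v (x i)); exact ⟨x j, hj.symm⟩) h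
      have heq : ∀ᶠ y in 𝓝 x, ω y = fun i => if i ∈ β then 0 else y i := by
        filter_upwards [e1, e2] with y h1 h2
        exact hω₂ y (by rw [h1]; exact h2)
      exact ((hcont β).continuousAt).congr_of_eventuallyEq heq
  · -- range
    rintro _ ⟨x, rfl⟩
    rcases lt_trichotomy (α.sup' hα fun i => Valued.v (x i))
        (β.sup' hβ fun i => Valued.v (x i)) with h | h | h
    · left; intro i hi; rw [hω₁ x h]; simp [hi]
    · left; intro i hi; rw [hω₃ x h]; simp [Finset.mem_union_left _ hi]
    · right; intro i hi; rw [hω₂ x h]; simp [hi]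
  · -- retraction
    rintro x (hx | hx)
    · have hdα : (α.sup' hα fun i => Valued.v (x i)) = 0 := (supZero α hα x).mpr hx
      rcases eq_or_lt_of_le (zero_le' : (0 : Γ₀) ≤ β.sup' hβ fun i => Valued.v (x i))
          with h | h
      · have heq : (α.sup' hα fun i => Valued.v (x i)) = β.sup' hβ fun i => Valued.v (x i) :=
          hdα.trans h
        rw [hω₃ x heq]; funext i
        rcases em (i ∈ α ∪ β) with hi | hi
        · rcases Finset.mem_union.mp hi with hi' | hi'
          · simp [hi, hx i hi']
          · simp [hi, (supZero β hβ x).mp h.symm i hi']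
        · simp [hi]
      · rw [hω₁ x (hdα ▸ h)]; funext i
        rcases em (i ∈ α) with hi | hi
        · simp [hi, hx i hi]
        · simp [hi]
    · have hdβ : (β.sup' hβ fun i => Valued.v (x i)) = 0 := (supZero β hβ x).mpr hx
      rcases eq_or_lt_of_le (zero_le' : (0 : Γ₀) ≤ α.sup' hα fun i => Valued.v (x i))
          with h | h
      · have heq : (α.sup' hα fun i => Valued.v (x i)) = β.sup' hβ fun i => Valued.v (x i) :=
          h.symm.trans hdβ.symm
        rw [hω₃ x heq]; funext i
        rcases em (i ∈ α ∪ β) with hi | hi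
        · rcases Finset.mem_union.mp hi with hi' | hi'
          · simp [hi, (supZero α hα x).mp h.symm i hi']
          · simp [hi, hx i hi']
        · simp [hi]
      · rw [hω₂ x (hdβ ▸ h)]; funext i
        rcases em (i ∈ β) with hi | hi
        · simp [hi, hx i hi]
        · simp [hi]
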